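/- Let δ ∈ (0, π/2), set p = 1 + 2δ/π, and let D_δ ⊂ ℝ² be the circular sector of radius 1 given in polar coordinates by D_δ = {(r,θ) : 0 ≤ r ≤ 1, −π/2 − δ ≤ θ ≤ π/2 + δ}. Then there exists a constant C > 0 such that any function Φ₁ which is continuous on D_δ, harmonic in the interior of D_δ, and equal to |x| on ∂D_δ satisfies |Φ₁(x)| ≤ C·|x|^{1/p} for all x ∈ D_δ. Equivalently, the harmonic function v on the half disc D′ = {(r,θ) : 0 ≤ r ≤ 1, −π/2 ≤ θ ≤ π/2} with boundary values v(x) = |x|^p on ∂D′ satisfies |v(x)| ≤ C·|x|, and Φ₁(z) = v(z^{1/p}) under the conformal map z ↦ z^p (in polar coordinates (r,θ) ↦ (r^p, pθ)) which takes D′ onto D_δ. -/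

import Mathlib

open Set

noncomputable section

/-- The closed circular sector of radius 1 and half-opening angle `π/2 + δ`, given in polar
coordinates by `D_δ = {(ρ,θ) : 0 ≤ ρ ≤ 1, |θ| ≤ π/2 + δ}`, viewed as a subset of `ℂ ≅ ℝ²`.
For `δ = 0` this is the (closed) right half disc `D′`. -/
def sector (δ : ℝ) : Set ℂ :=
  {z : ℂ | ‖z‖ ≤ 1 ∧ |Complex.arg z| ≤ Real.pi / 2 + δ}

/-- The Laplacian of `Φ : ℂ → ℝ` (viewing `ℂ` as `ℝ²` with orthonormal basis `1, i`):
the sum of the two pure second directional derivatives. -/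
def lap (Φ : ℂ → ℝ) (x : ℂ) : ℝ :=
  fderiv ℝ (fun y => fderiv ℝ Φ y 1) x 1
    + fderiv ℝ (fun y => fderiv ℝ Φ y Complex.I) x Complex.I

open Real



lemma sector_eq {δ : ℝ} (h0 : 0 ≤ δ) (h2 : δ < Real.pi / 2) :
    sector δ = {z : ℂ | ‖z‖ ≤ 1 ∧
      ‖z‖ * Real.cos (Real.pi / 2 + δ) ≤ z.re} := by
  have hpi := Real.pi_pos
  have hTpi : Real.pi / 2 + δ < Real.pi := by linarith
  have hT0 : 0 ≤ Real.pi / 2 + δ := by linarith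
  ext z
  rcases eq_or_ne z 0 with rfl | hz
  · simp only [sector, mem_setOf_eq, norm_zero, Complex.arg_zero, abs_zero, zero_mul,
      Complex.zero_re]
    norm_num [hT0]
  · have habs : 0 < ‖z‖ := norm_pos_iff.mpr hz
    have hre : z.re = ‖z‖ * Real.cos (Complex.arg z) := by
      rw [Complex.cos_arg hz]; field_simp
    simp only [sector, mem_setOf_eq, hre]
    constructor
    · rintro ⟨h1, h3⟩
      refine ⟨h1, mul_le_mul_of_nonneg_left ?_ habs.le⟩
      rw [← Real.cos_abs (Complex.arg z)]
      exact (Real.strictAntiOn_cos.le_iff_ge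
          ⟨hT0, hTpi.le⟩ ⟨abs_nonneg _, Complex.abs_arg_le_pi z⟩).mpr h3
    · rintro ⟨h1, h3⟩
      have h3' : Real.cos (Real.pi / 2 + δ) ≤ Real.cos |Complex.arg z| := by
        rw [Real.cos_abs]
        exact le_of_mul_le_mul_left h3 habs
      refine ⟨h1, ?_⟩
      by_contra hlt
      push_neg at hlt
      have := Real.strictAntiOn_cos ⟨hT0, hTpi.le⟩
          ⟨hT0.trans hlt.le, Complex.abs_arg_le_pi z⟩ hlt
      linarith

lemma isClosed_sector {δ : ℝ} (h0 : 0 ≤ δ) (h2 : δ < Real.pi / 2) :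
    IsClosed (sector δ) := by
  rw [sector_eq h0 h2]
  exact (isClosed_le continuous_norm continuous_const).inter
    (isClosed_le (continuous_norm.mul continuous_const) Complex.continuous_re)

lemma isCompact_sector {δ : ℝ} (h0 : 0 ≤ δ) (h2 : δ < Real.pi / 2) :
    IsCompact (sector δ) := by
  refine (isCompact_closedBall (0:ℂ) 1).of_isClosed_subset (isClosed_sector h0 h2) ?_
  intro z hz
  simpa [Metric.mem_closedBall, Complex.dist_eq] using hz.1

lemma zero_not_mem_interior_sector {δ : ℝ} (h2 : δ < Real.pi / 2) :
    (0:ℂ) ∉ interior (sector δ) := by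
  have hpi := Real.pi_pos
  intro h
  rw [mem_interior_iff_mem_nhds, Metric.mem_nhds_iff] at h
  obtain ⟨ε, hε, hball⟩ := h
  have habs : ‖((-(ε/2) : ℝ) : ℂ)‖ = ε/2 := by
    rw [Complex.norm_real, Real.norm_eq_abs, abs_of_neg (by linarith)]; ring
  have hmem : ((-(ε/2) : ℝ) : ℂ) ∈ Metric.ball (0:ℂ) ε := by
    simp only [Metric.mem_ball, Complex.dist_eq, sub_zero, habs]
    linarith
  have := (hball hmem).2
  rw [Complex.arg_ofReal_of_neg (by linarith)] at this
  rw [abs_of_pos hpi] at this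
  linarith

lemma mem_slitPlane_of_sector {δ : ℝ} (h2 : δ < Real.pi / 2) {z : ℂ}
    (hz : z ∈ sector δ) (hz0 : z ≠ 0) : z ∈ Complex.slitPlane := by
  have hpi := Real.pi_pos
  rw [Complex.mem_slitPlane_iff_arg]
  refine ⟨fun hp => ?_, hz0⟩
  have := hz.2
  rw [hp, abs_of_pos hpi] at this
  linarith

lemma interior_sector_slitPlane {δ : ℝ} (h2 : δ < Real.pi / 2) {z : ℂ}
    (hz : z ∈ interior (sector δ)) : z ∈ Complex.slitPlane := by
  refine mem_slitPlane_of_sector h2 (interior_subset hz) ?_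
  rintro rfl
  exact zero_not_mem_interior_sector h2 hz


noncomputable section


/-- real part of `z ^ σ` in polar form -/
lemma cpow_re_eq (σ : ℝ) {z : ℂ} (hz : z ≠ 0) :
    (z ^ (σ:ℂ)).re = ‖z‖ ^ σ * Real.cos (σ * Complex.arg z) := by
  rw [Complex.cpow_def_of_ne_zero hz, Complex.exp_re]
  have h1 : (Complex.log z * (σ:ℂ)).re = σ * Real.log (‖z‖) := by
    simp [Complex.log_re]; ring
  have h2 : (Complex.log z * (σ:ℂ)).im = σ * Complex.arg z := by
    simp [Complex.log_im]; ring
  rw [h1, h2, Real.rpow_def_of_pos (norm_pos_iff.mpr hz), mul_comm (Real.log _) σ]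

lemma abs_cpow_re_le (σ : ℝ) (hσ : 0 < σ) (z : ℂ) :
    |(z ^ (σ:ℂ)).re| ≤ ‖z‖ ^ σ := by
  rcases eq_or_ne z 0 with rfl | hz
  · rw [Complex.zero_cpow (by exact_mod_cast hσ.ne')]
    simp [Real.zero_rpow hσ.ne']
  · rw [cpow_re_eq σ hz, abs_mul]
    have h1 : |‖z‖ ^ σ| = ‖z‖ ^ σ := abs_of_nonneg (by positivity)
    rw [h1]
    nlinarith [abs_cos_le_one (σ * Complex.arg z), Real.rpow_nonneg (norm_nonneg z) σ,
      abs_nonneg (Real.cos (σ * Complex.arg z))]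

/-- continuity of `z ↦ (z ^ σ).re` at `0` within anything, and on slitPlane -/
lemma continuousOn_cpow_re (σ : ℝ) (hσ : 0 < σ) {S : Set ℂ}
    (hS : ∀ z ∈ S, z ≠ 0 → z ∈ Complex.slitPlane) :
    ContinuousOn (fun z => (z ^ (σ:ℂ)).re) S := by
  intro z hz
  rcases eq_or_ne z 0 with rfl | hz0
  · have h0 : ((0:ℂ) ^ (σ:ℂ)).re = 0 := by
      rw [Complex.zero_cpow (by exact_mod_cast hσ.ne')]; simp
    rw [ContinuousWithinAt, h0]
    have hg : Filter.Tendsto (fun z : ℂ => ‖z‖ ^ σ) (nhdsWithin 0 S) (nhds 0) := by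
      have hc : ContinuousAt (fun z : ℂ => ‖z‖ ^ σ) 0 := by
        refine (Real.continuousAt_rpow_const _ _ (Or.inr hσ.le)).comp
          continuous_norm.continuousAt
      have := hc.continuousWithinAt (s := S)
      rw [ContinuousWithinAt] at this
      simpa [Real.zero_rpow hσ.ne'] using this
    exact squeeze_zero_norm (fun t => by simpa using abs_cpow_re_le σ hσ t) hg
  · exact ((Complex.continuous_re.continuousAt.comp
      (continuousAt_cpow_const (hS z hz hz0)))).continuousWithinAt

end

noncomputable section

open Complex in
/-- If `f` is holomorphic near `x` (witnessed by derivative `f'` nearby and second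
derivative at `x`), then `Re ∘ f` has zero Laplacian at `x`. -/
lemma lap_re_holo {f f' : ℂ → ℂ} {x : ℂ} {c : ℂ}
    (h1 : ∀ᶠ y in nhds x, HasDerivAt f (f' y) y)
    (h2 : HasDerivAt f' c x) :
    lap (fun z => (f z).re) x = 0 := by
  have key : ∀ e : ℂ, fderiv ℝ (fun y => fderiv ℝ (fun z => (f z).re) y e) x e
      = (e * (e * c)).re := by
    intro e
    have hL : ∀ᶠ y in nhds x,
        fderiv ℝ (fun z => (f z).re) y e = (e * f' y).re := by
      filter_upwards [h1] with y hy
      have hF : HasFDerivAt f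
          (((ContinuousLinearMap.smulRight (1 : ℂ →L[ℂ] ℂ) (f' y))).restrictScalars ℝ) y :=
        (hasDerivAt_iff_hasFDerivAt.mp hy).restrictScalars ℝ
      have hRe : HasFDerivAt (fun z => (f z).re)
          (Complex.reCLM.comp
            (((ContinuousLinearMap.smulRight (1 : ℂ →L[ℂ] ℂ) (f' y))).restrictScalars ℝ)) y :=
        Complex.reCLM.hasFDerivAt.comp y hF
      rw [hRe.fderiv]
      simp [mul_comm]
    have hEq : (fun y => fderiv ℝ (fun z => (f z).re) y e)
        =ᶠ[nhds x] fun y => (e * f' y).re := hL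
    rw [hEq.fderiv_eq]
    have hmul : HasDerivAt (fun y => e * f' y) (e * c) x := h2.const_mul e
    have hF2 : HasFDerivAt (fun y => e * f' y)
        (((ContinuousLinearMap.smulRight (1 : ℂ →L[ℂ] ℂ) (e * c))).restrictScalars ℝ) x :=
      (hasDerivAt_iff_hasFDerivAt.mp hmul).restrictScalars ℝ
    have hRe2 : HasFDerivAt (fun y => (e * f' y).re)
        (Complex.reCLM.comp
          (((ContinuousLinearMap.smulRight (1 : ℂ →L[ℂ] ℂ) (e * c))).restrictScalars ℝ)) x :=
      Complex.reCLM.hasFDerivAt.comp x hF2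
    rw [hRe2.fderiv]
    simp [mul_comm]
  rw [lap, key 1, key Complex.I]
  have : Complex.I * (Complex.I * c) = -c := by
    rw [← mul_assoc, Complex.I_mul_I]; ring
  rw [this]
  simp

lemma contDiffAt_cpow_re (σ : ℝ) {x : ℂ} (hx : x ∈ Complex.slitPlane) :
    ContDiffAt ℝ 2 (fun z => (z ^ (σ:ℂ)).re) x := by
  have hd : DifferentiableOn ℂ (fun z : ℂ => z ^ (σ:ℂ)) Complex.slitPlane := by
    intro z hz
    exact ((Complex.hasStrictDerivAt_cpow_const hz).hasDerivAt.differentiableAt).differentiableWithinAt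
  have ha : AnalyticAt ℂ (fun z : ℂ => z ^ (σ:ℂ)) x :=
    hd.analyticAt (Complex.isOpen_slitPlane.mem_nhds hx)
  have hC : ContDiffAt ℂ 2 (fun z : ℂ => z ^ (σ:ℂ)) x := ha.contDiffAt
  exact (Complex.reCLM.contDiff.of_le le_top).contDiffAt.comp x (hC.restrict_scalars ℝ)

lemma lap_cpow_re (σ : ℝ) {x : ℂ} (hx : x ∈ Complex.slitPlane) :
    lap (fun z => (z ^ (σ:ℂ)).re) x = 0 := by
  refine lap_re_holo (f' := fun y => (σ:ℂ) * y ^ ((σ:ℂ) - 1))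
    (c := (σ:ℂ) * (((σ:ℂ) - 1) * x ^ ((σ:ℂ) - 1 - 1))) ?_ ?_
  · filter_upwards [Complex.isOpen_slitPlane.mem_nhds hx] with y hy
    exact (Complex.hasStrictDerivAt_cpow_const hy).hasDerivAt
  · exact ((Complex.hasStrictDerivAt_cpow_const (c := (σ:ℂ) - 1) hx).hasDerivAt).const_mul _

end

noncomputable section

lemma diff_inner {f : ℂ → ℝ} {x : ℂ} (hf : ContDiffAt ℝ 2 f x) (e : ℂ) :
    DifferentiableAt ℝ (fun y => fderiv ℝ f y e) x := by
  have h1 : ContDiffAt ℝ 1 (fderiv ℝ f) x := hf.fderiv_right (by norm_num)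
  exact (h1.differentiableAt one_ne_zero).clm_apply (differentiableAt_const e)

lemma lap_sub {f g : ℂ → ℝ} {x : ℂ} (hf : ContDiffAt ℝ 2 f x) (hg : ContDiffAt ℝ 2 g x) :
    lap (fun z => f z - g z) x = lap f x - lap g x := by
  have hfe : ∀ᶠ y in nhds x, ContDiffAt ℝ 2 f y := hf.eventually (by simp)
  have hge : ∀ᶠ y in nhds x, ContDiffAt ℝ 2 g y := hg.eventually (by simp)
  have key : ∀ e : ℂ, fderiv ℝ (fun y => fderiv ℝ (fun z => f z - g z) y e) x e
      = fderiv ℝ (fun y => fderiv ℝ f y e) x e - fderiv ℝ (fun y => fderiv ℝ g y e) x e := by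
    intro e
    have hEq : (fun y => fderiv ℝ (fun z => f z - g z) y e)
        =ᶠ[nhds x] fun y => fderiv ℝ f y e - fderiv ℝ g y e := by
      filter_upwards [hfe, hge] with y hfy hgy
      rw [fderiv_fun_sub (hfy.differentiableAt two_ne_zero) (hgy.differentiableAt two_ne_zero)]
      simp
    rw [hEq.fderiv_eq, fderiv_fun_sub (diff_inner hf e) (diff_inner hg e)]
    simp
  rw [lap, lap, lap, key 1, key Complex.I]; ring

lemma lap_add {f g : ℂ → ℝ} {x : ℂ} (hf : ContDiffAt ℝ 2 f x) (hg : ContDiffAt ℝ 2 g x) :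
    lap (fun z => f z + g z) x = lap f x + lap g x := by
  have hfe : ∀ᶠ y in nhds x, ContDiffAt ℝ 2 f y := hf.eventually (by simp)
  have hge : ∀ᶠ y in nhds x, ContDiffAt ℝ 2 g y := hg.eventually (by simp)
  have key : ∀ e : ℂ, fderiv ℝ (fun y => fderiv ℝ (fun z => f z + g z) y e) x e
      = fderiv ℝ (fun y => fderiv ℝ f y e) x e + fderiv ℝ (fun y => fderiv ℝ g y e) x e := by
    intro e
    have hEq : (fun y => fderiv ℝ (fun z => f z + g z) y e)
        =ᶠ[nhds x] fun y => fderiv ℝ f y e + fderiv ℝ g y e := by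
      filter_upwards [hfe, hge] with y hfy hgy
      rw [fderiv_fun_add (hfy.differentiableAt two_ne_zero) (hgy.differentiableAt two_ne_zero)]
      simp
    rw [hEq.fderiv_eq, fderiv_fun_add (diff_inner hf e) (diff_inner hg e)]
    simp
  rw [lap, lap, lap, key 1, key Complex.I]; ring

lemma lap_const_mul {f : ℂ → ℝ} {x : ℂ} (c : ℝ) (hf : ContDiffAt ℝ 2 f x) :
    lap (fun z => c * f z) x = c * lap f x := by
  have hfe : ∀ᶠ y in nhds x, ContDiffAt ℝ 2 f y := hf.eventually (by simp)
  have key : ∀ e : ℂ, fderiv ℝ (fun y => fderiv ℝ (fun z => c * f z) y e) x e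
      = c * fderiv ℝ (fun y => fderiv ℝ f y e) x e := by
    intro e
    have hEq : (fun y => fderiv ℝ (fun z => c * f z) y e)
        =ᶠ[nhds x] fun y => c * fderiv ℝ f y e := by
      filter_upwards [hfe] with y hfy
      rw [fderiv_const_mul (hfy.differentiableAt two_ne_zero)]
      simp
    rw [hEq.fderiv_eq, fderiv_const_mul (diff_inner hf e)]
    simp
  rw [lap, lap, key 1, key Complex.I]; ring

lemma contDiffAt_re_sq (x : ℂ) : ContDiffAt ℝ 2 (fun z : ℂ => z.re ^ 2) x :=
  ((Complex.reCLM.contDiff.of_le le_top).pow 2).contDiffAt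

lemma lap_re_sq (x : ℂ) : lap (fun z : ℂ => z.re ^ 2) x = 2 := by
  have hfd : ∀ y : ℂ, fderiv ℝ (fun z : ℂ => z.re ^ 2) y = (2 * y.re ^ 1) • Complex.reCLM := by
    intro y
    exact ((hasDerivAt_pow 2 (y.re)).comp_hasFDerivAt y Complex.reCLM.hasFDerivAt).fderiv
  have h1 : (fun y : ℂ => fderiv ℝ (fun z : ℂ => z.re ^ 2) y 1) = fun y : ℂ => 2 * y.re := by
    funext y; rw [hfd y]; simp
  have hI : (fun y : ℂ => fderiv ℝ (fun z : ℂ => z.re ^ 2) y Complex.I) = fun _ : ℂ => 0 := by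
    funext y; rw [hfd y]; simp
  rw [lap, h1, hI]
  have h2 : fderiv ℝ (fun y : ℂ => 2 * y.re) x = (2 : ℝ) • Complex.reCLM := by
    have : HasFDerivAt (fun y : ℂ => 2 * y.re) ((2:ℝ) • Complex.reCLM) x := by
      exact ((Complex.reCLM.hasFDerivAt (x := x)).const_smul (2:ℝ)).congr_of_eventuallyEq
        (Filter.Eventually.of_forall fun y => by simp)
    exact this.fderiv
  rw [h2]
  simp

end

noncomputable section

/-- 1D second derivative test at a local max. -/
lemma second_deriv_test_1d {g g' : ℝ → ℝ} {L : ℝ}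
    (hg : ∀ᶠ t in nhds (0:ℝ), HasDerivAt g (g' t) t)
    (hg' : HasDerivAt g' L 0)
    (hmax : IsLocalMax g 0) : L ≤ 0 := by
  by_contra hL
  push_neg at hL
  have h0 : g' 0 = 0 := by
    have := hmax.deriv_eq_zero
    rwa [(hg.self_of_nhds).deriv] at this
  -- slope of g' tends to L > 0, so g' > 0 on a right neighborhood
  have hslope : Filter.Tendsto (slope g' 0) (nhdsWithin 0 {(0:ℝ)}ᶜ) (nhds L) :=
    hasDerivAt_iff_tendsto_slope.mp hg'
  have hpos : ∀ᶠ t in nhdsWithin 0 {(0:ℝ)}ᶜ, 0 < slope g' 0 t :=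
    hslope.eventually (eventually_gt_nhds hL)
  have hposR : ∀ᶠ t in nhdsWithin (0:ℝ) (Set.Ioi 0), 0 < g' t := by
    have hsub : nhdsWithin (0:ℝ) (Set.Ioi 0) ≤ nhdsWithin 0 {(0:ℝ)}ᶜ :=
      nhdsWithin_mono 0 (fun t ht => ne_of_gt ht)
    filter_upwards [hsub hpos, self_mem_nhdsWithin] with t ht ht0
    have hts : slope g' 0 t = g' t / t := by
      rw [slope_def_field, h0, sub_zero, sub_zero]
    rw [hts] at ht
    have htpos : (0:ℝ) < t := ht0
    rcases div_pos_iff.mp ht with ⟨h, _⟩ | ⟨_, h2⟩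
    · exact h
    · linarith
  rw [Filter.eventually_iff] at hposR
  obtain ⟨u, hu, hIoo⟩ := mem_nhdsGT_iff_exists_Ioo_subset.mp hposR
  obtain ⟨r, hr, hball⟩ := Metric.eventually_nhds_iff.mp (hg.and hmax)
  set η := min (u/2) (r/2) with hη
  have hupos : (0:ℝ) < u := hu
  have hηpos : 0 < η := by positivity
  have hηu : η < u := by
    have := min_le_left (u/2) (r/2); linarith
  have hηr : η < r := by
    have := min_le_right (u/2) (r/2); linarith
  -- g is strictly monotone on [0, η]
  have hmono : StrictMonoOn g (Set.Icc 0 η) := by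
    refine strictMonoOn_of_deriv_pos (convex_Icc 0 η) ?_ ?_
    · intro t ht
      have htr : |t - 0| < r := by
        rw [abs_sub_comm, abs_sub_lt_iff]
        constructor <;> [linarith [ht.1, ht.2]; linarith [ht.1, ht.2]]
      exact ((hball htr).1.continuousAt).continuousWithinAt
    · intro t ht
      rw [interior_Icc] at ht
      have htr : |t - 0| < r := by
        rw [abs_sub_comm, abs_sub_lt_iff]
        constructor <;> [linarith [ht.1, ht.2]; linarith [ht.1, ht.2]]
      rw [(hball htr).1.deriv]
      exact hIoo ⟨ht.1, by linarith [ht.2]⟩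
  have hlt : g 0 < g η := hmono (by constructor <;> simp [hηpos.le]) 
      (by constructor <;> simp [hηpos.le]) hηpos
  have : g η ≤ g 0 := by
    have hr2 : |η - 0| < r := by rw [abs_sub_comm, abs_sub_lt_iff]; constructor <;> linarith
    exact (hball hr2).2
  linarith

end

noncomputable section

/-- Second derivative test in direction `e` at an interior local max. -/
lemma d2_nonpos {f : ℂ → ℝ} {x : ℂ} (hf : ContDiffAt ℝ 2 f x)
    (hmax : IsLocalMax f x) (e : ℂ) :
    fderiv ℝ (fun y => fderiv ℝ f y e) x e ≤ 0 := by
  set ℓ : ℝ → ℂ := fun t => x + t • e with hℓdef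
  have hℓ : ∀ t : ℝ, HasDerivAt ℓ e t := by
    intro t
    simpa [hℓdef] using ((hasDerivAt_id t).smul_const e).const_add x
  have hℓ0 : ℓ 0 = x := by simp [hℓdef]
  have hℓcont : Filter.Tendsto ℓ (nhds 0) (nhds x) := by
    have := (hℓ 0).continuousAt.tendsto
    rwa [hℓ0] at this
  have hfe : ∀ᶠ y in nhds x, ContDiffAt ℝ 2 f y := hf.eventually (by simp)
  set G : ℂ → ℝ := fun y => fderiv ℝ f y e with hGdef
  have hG : DifferentiableAt ℝ G x := diff_inner hf e
  -- g := f ∘ ℓ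
  have hg : ∀ᶠ t in nhds (0:ℝ), HasDerivAt (fun s => f (ℓ s)) (G (ℓ t)) t := by
    filter_upwards [hℓcont.eventually hfe] with t ht
    exact (ht.differentiableAt two_ne_zero).hasFDerivAt.comp_hasDerivAt t (hℓ t)
  have hg' : HasDerivAt (fun t => G (ℓ t)) (fderiv ℝ G x e) 0 := by
    have hGF : HasFDerivAt G (fderiv ℝ G x) (ℓ 0) := by rw [hℓ0]; exact hG.hasFDerivAt
    exact hGF.comp_hasDerivAt 0 (hℓ 0)
  have hmax' : IsLocalMax (fun s => f (ℓ s)) 0 := by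
    have := hℓcont.eventually hmax
    simpa [IsLocalMax, IsMaxFilter, hℓ0] using this
  exact second_deriv_test_1d hg hg' hmax'

/-- Maximum principle: a harmonic function on a compact set `K ⊆ ball of radius 1`,
nonpositive on the frontier, is nonpositive. -/
lemma max_principle {K : Set ℂ} (hKc : IsCompact K)
    (hKb : ∀ z ∈ K, z.re ^ 2 ≤ 1)
    {u : ℂ → ℝ} (hu : ContinuousOn u K) (hud : ContDiffOn ℝ 2 u (interior K))
    (hlap : ∀ x ∈ interior K, lap u x = 0)
    (hfr : ∀ x ∈ frontier K, u x ≤ 0) :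
    ∀ x ∈ K, u x ≤ 0 := by
  intro x hx
  refine le_of_forall_pos_le_add fun ε hε => ?_
  set F : ℂ → ℝ := fun z => u z + ε * z.re ^ 2 with hFdef
  have hFc : ContinuousOn F K :=
    hu.add ((continuous_const.mul ((Complex.continuous_re).pow 2)).continuousOn)
  obtain ⟨x₀, hx₀K, hx₀max⟩ := hKc.exists_isMaxOn ⟨x, hx⟩ hFc
  by_cases hint : x₀ ∈ interior K
  · exfalso
    have hCD : ContDiffAt ℝ 2 u x₀ := hud.contDiffAt (isOpen_interior.mem_nhds hint)
    have hCDF : ContDiffAt ℝ 2 F x₀ :=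
      hCD.add ((contDiffAt_re_sq x₀).const_smul ε |>.congr_of_eventuallyEq
        (by filter_upwards with z; simp [smul_eq_mul]))
    have hlapF : lap F x₀ = 2 * ε := by
      have h1 : lap F x₀ = lap u x₀ + lap (fun z => ε * z.re ^ 2) x₀ :=
        lap_add hCD ((contDiffAt_re_sq x₀).const_smul ε |>.congr_of_eventuallyEq
          (by filter_upwards with z; simp [smul_eq_mul]))
      rw [h1, hlap x₀ hint, lap_const_mul ε (contDiffAt_re_sq x₀), lap_re_sq]
      ring
    have hlm : IsLocalMax F x₀ := hx₀max.isLocalMax (mem_interior_iff_mem_nhds.mp hint)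
    have h1 := d2_nonpos hCDF hlm 1
    have hI := d2_nonpos hCDF hlm Complex.I
    have : lap F x₀ ≤ 0 := by rw [lap]; linarith
    rw [hlapF] at this
    linarith
  · have hx₀fr : x₀ ∈ frontier K := by
      rw [frontier, mem_diff]
      exact ⟨subset_closure hx₀K, hint⟩
    have h1 : F x ≤ F x₀ := hx₀max hx
    have h2 : F x₀ ≤ 0 + ε := by
      have := hfr x₀ hx₀fr
      have := hKb x₀ hx₀K
      simp only [hFdef]
      nlinarith
    have h3 : 0 ≤ ε * x.re ^ 2 := by positivity
    simp only [hFdef] at h1 h2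
    linarith

end

noncomputable section
open Real

lemma cos_sub_cos_le (a b : ℝ) : Real.cos a - Real.cos b ≤ |b - a| := by
  rw [Real.cos_sub_cos]
  have h1 : |(-2) * Real.sin ((a + b) / 2) * Real.sin ((a - b) / 2)|
      ≤ 2 * (1 * |(a - b) / 2|) := by
    rw [abs_mul, abs_mul, abs_neg, abs_two]
    have hs1 : |Real.sin ((a + b) / 2)| ≤ 1 := Real.abs_sin_le_one _
    have hs2 : |Real.sin ((a - b) / 2)| ≤ |(a - b) / 2| := Real.abs_sin_le_abs
    have := mul_le_mul hs1 hs2 (abs_nonneg _) zero_le_one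
    nlinarith [abs_nonneg (Real.sin ((a+b)/2)), abs_nonneg ((a-b)/2)]
  have h2 : (2:ℝ) * (1 * |(a - b) / 2|) = |a - b| := by
    rw [abs_div, abs_two]; ring
  calc -2 * Real.sin ((a + b) / 2) * Real.sin ((a - b) / 2)
      ≤ |(-2) * Real.sin ((a + b) / 2) * Real.sin ((a - b) / 2)| := le_abs_self _
    _ ≤ 2 * (1 * |(a - b) / 2|) := h1
    _ = |a - b| := h2
    _ = |b - a| := abs_sub_comm a b

lemma rpow_le_rpow_exp {r γ κ : ℝ} (hr0 : 0 ≤ r) (hr1 : r ≤ 1) (hγκ : γ ≤ κ) (hγ : 0 < γ) :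
    r ^ κ ≤ r ^ γ := by
  have hκ : 0 < κ := lt_of_lt_of_le hγ hγκ
  rcases eq_or_lt_of_le hr0 with h | h
  · rw [← h, Real.zero_rpow hκ.ne', Real.zero_rpow hγ.ne']
  · exact Real.rpow_le_rpow_of_exponent_ge h hr1 hγκ

lemma master {δ' γ κ s : ℝ} (hδ'0 : 0 ≤ δ') (hδ' : δ' < Real.pi/2)
    (hγ0 : 0 < γ) (hγκ : γ ≤ κ) (hs : 0 < s)
    (hγT : γ * (Real.pi/2 + δ') = Real.pi/2)
    (hκT : Real.cos (κ * (Real.pi/2 + δ')) = -s) :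
    ∀ u : ℂ → ℝ, ContinuousOn u (sector δ') →
      ContDiffOn ℝ 2 u (interior (sector δ')) →
      (∀ x ∈ interior (sector δ'), lap u x = 0) →
      (∀ x ∈ frontier (sector δ'), u x = ‖x‖ ^ κ) →
      ∀ x ∈ sector δ', |u x| ≤ (Real.pi*κ/(2*γ*s) + 1/s) * ‖x‖ ^ γ := by
  have hpi := Real.pi_pos
  set T : ℝ := Real.pi/2 + δ' with hTdef
  have hT0 : 0 < T := by simp only [hTdef]; linarith
  have hκ0 : 0 < κ := lt_of_lt_of_le hγ0 hγκ
  set A : ℝ := Real.pi*κ/(2*γ*s) with hAdef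
  have hA0 : 0 < A := by apply div_pos; positivity; positivity
  set w : ℂ → ℝ := fun z => A * (z ^ (γ:ℂ)).re - (1/s) * (z ^ (κ:ℂ)).re with hwdef
  -- exponent comparison on the sector
  have hrpow : ∀ z ∈ sector δ', ‖z‖ ^ κ ≤ ‖z‖ ^ γ := fun z hz =>
    rpow_le_rpow_exp (norm_nonneg z) hz.1 hγκ hγ0
  -- (W1) barrier dominates the boundary data on the whole sector
  have hW1 : ∀ z ∈ sector δ', ‖z‖ ^ κ ≤ w z := by
    intro z hz
    rcases eq_or_ne z 0 with rfl | hz0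
    · simp only [hwdef, Complex.zero_cpow (by exact_mod_cast hγ0.ne' : (γ:ℂ) ≠ 0),
        Complex.zero_cpow (by exact_mod_cast hκ0.ne' : (κ:ℂ) ≠ 0), map_zero, norm_zero,
        Complex.zero_re, mul_zero, sub_zero, Real.zero_rpow hκ0.ne']
      exact le_refl 0
    · have hr0 : 0 < ‖z‖ := norm_pos_iff.mpr hz0
      set r : ℝ := ‖z‖ with hrdef
      set φ : ℝ := |Complex.arg z| with hφdef
      have hφ0 : 0 ≤ φ := abs_nonneg _
      have hφT : φ ≤ T := hz.2
      have hcosγ : ((z : ℂ) ^ (γ:ℂ)).re = r ^ γ * Real.cos (γ * φ) := by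
        rw [cpow_re_eq γ hz0]
        congr 1
        rw [← Real.cos_abs (γ * Complex.arg z), abs_mul, abs_of_pos hγ0]
      have hcosκ : ((z : ℂ) ^ (κ:ℂ)).re = r ^ κ * Real.cos (κ * φ) := by
        rw [cpow_re_eq κ hz0]
        congr 1
        rw [← Real.cos_abs (κ * Complex.arg z), abs_mul, abs_of_pos hκ0]
      -- key trigonometric estimate
      have hγφ0 : 0 ≤ γ * φ := by positivity
      have hγφT : γ * φ ≤ Real.pi/2 := by
        rw [← hγT]
        exact mul_le_mul_of_nonneg_left hφT hγ0.le
      have hcos0 : 0 ≤ Real.cos (γ * φ) := Real.cos_nonneg_of_mem_Icc ⟨by linarith, hγφT⟩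
      have e1 : Real.cos (κ * φ) + s ≤ κ * (T - φ) := by
        have := cos_sub_cos_le (κ * φ) (κ * T)
        rw [hκT] at this
        have habs : |κ * T - κ * φ| = κ * (T - φ) := by
          rw [abs_of_nonneg (by nlinarith)]; ring
        rw [habs] at this
        linarith
      have e2 : Real.cos (γ * φ) = Real.sin (γ * (T - φ)) := by
        rw [← Real.sin_pi_div_two_sub, ← hγT]
        ring_nf
      have e3 : 2 / Real.pi * (γ * (T - φ)) ≤ Real.sin (γ * (T - φ)) := by
        apply Real.mul_le_sin
        · nlinarith
        · rw [← hγT]; nlinarith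
      have ekey : Real.cos (κ * φ) + s ≤ A * s * Real.cos (γ * φ) := by
        have hAs : A * s = Real.pi * κ / (2 * γ) := by
          rw [hAdef]; field_simp
        rw [hAs, e2]
        calc Real.cos (κ * φ) + s ≤ κ * (T - φ) := e1
          _ = Real.pi * κ / (2 * γ) * (2 / Real.pi * (γ * (T - φ))) := by
              field_simp
          _ ≤ Real.pi * κ / (2 * γ) * Real.sin (γ * (T - φ)) := by
              apply mul_le_mul_of_nonneg_left e3 (by positivity)
      -- assemble
      have hrκγ : r ^ κ ≤ r ^ γ := hrpow z hz
      have hrκ0 : 0 ≤ r ^ κ := Real.rpow_nonneg hr0.le κ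
      simp only [hwdef, hcosγ, hcosκ]
      have step1 : A * r ^ κ * Real.cos (γ * φ) ≤ A * r ^ γ * Real.cos (γ * φ) :=
        mul_le_mul_of_nonneg_right (mul_le_mul_of_nonneg_left hrκγ hA0.le) hcos0
      have step2 : r ^ κ * (Real.cos (κ * φ) + s) ≤ r ^ κ * (A * s * Real.cos (γ * φ)) :=
        mul_le_mul_of_nonneg_left ekey hrκ0
      have hs' : 0 < 1/s := by positivity
      have hdiv := mul_le_mul_of_nonneg_left step2 (le_of_lt hs')
      have eL : (1/s) * (r ^ κ * (Real.cos (κ * φ) + s))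
          = (1/s) * (r ^ κ * Real.cos (κ * φ)) + r ^ κ := by field_simp
      have eR : (1/s) * (r ^ κ * (A * s * Real.cos (γ * φ)))
          = A * r ^ κ * Real.cos (γ * φ) := by field_simp
      rw [eL, eR] at hdiv
      linarith [step1]
  -- (W2) upper bound for the barrier
  have hW2 : ∀ z ∈ sector δ', |w z| ≤ (A + 1/s) * ‖z‖ ^ γ := by
    intro z hz
    have b1 := abs_cpow_re_le γ hγ0 z
    have b2 := abs_cpow_re_le κ hκ0 z
    have hrκγ := hrpow z hz
    have hs' : 0 < 1/s := by positivity
    have htri : |A * (z ^ (γ:ℂ)).re - (1/s) * (z ^ (κ:ℂ)).re|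
        ≤ A * |(z ^ (γ:ℂ)).re| + (1/s) * |(z ^ (κ:ℂ)).re| := by
      rw [sub_eq_add_neg]
      refine (abs_add_le _ _).trans ?_
      rw [abs_neg, abs_mul, abs_mul, abs_of_pos hA0, abs_of_pos hs']
    have l1 : A * |(z ^ (γ:ℂ)).re| ≤ A * (‖z‖ ^ γ) :=
      mul_le_mul_of_nonneg_left b1 hA0.le
    have l2 : (1/s) * |(z ^ (κ:ℂ)).re| ≤ (1/s) * (‖z‖ ^ γ) :=
      mul_le_mul_of_nonneg_left (b2.trans hrκγ) hs'.le
    simp only [hwdef]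
    calc |A * (z ^ (γ:ℂ)).re - (1/s) * (z ^ (κ:ℂ)).re|
        ≤ A * |(z ^ (γ:ℂ)).re| + (1/s) * |(z ^ (κ:ℂ)).re| := htri
      _ ≤ A * (‖z‖ ^ γ) + (1/s) * (‖z‖ ^ γ) := add_le_add l1 l2
      _ = (A + 1/s) * ‖z‖ ^ γ := by ring
  -- (W3) continuity of the barrier
  have hW3 : ContinuousOn w (sector δ') := by
    apply ContinuousOn.sub
    · exact continuousOn_const.mul (continuousOn_cpow_re γ hγ0
        (fun z hz hz0 => mem_slitPlane_of_sector hδ' hz hz0))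
    · exact continuousOn_const.mul (continuousOn_cpow_re κ hκ0
        (fun z hz hz0 => mem_slitPlane_of_sector hδ' hz hz0))
  -- (W4) barrier is harmonic in the interior
  have hW4cd : ∀ x ∈ interior (sector δ'), ContDiffAt ℝ 2 w x := by
    intro x hx
    have hsl := interior_sector_slitPlane hδ' hx
    exact ((contDiffAt_cpow_re γ hsl).const_smul A |>.congr_of_eventuallyEq
        (by filter_upwards with z; simp [smul_eq_mul])).sub
      ((contDiffAt_cpow_re κ hsl).const_smul (1/s) |>.congr_of_eventuallyEq
        (by filter_upwards with z; simp [smul_eq_mul]))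
  have hW4 : ∀ x ∈ interior (sector δ'), lap w x = 0 := by
    intro x hx
    have hsl := interior_sector_slitPlane hδ' hx
    have h1 : lap w x = lap (fun z => A * (z ^ (γ:ℂ)).re) x
        - lap (fun z => (1/s) * (z ^ (κ:ℂ)).re) x := by
      apply lap_sub
      · exact (contDiffAt_cpow_re γ hsl).const_smul A |>.congr_of_eventuallyEq
          (by filter_upwards with z; simp [smul_eq_mul])
      · exact (contDiffAt_cpow_re κ hsl).const_smul (1/s) |>.congr_of_eventuallyEq
          (by filter_upwards with z; simp [smul_eq_mul])
    rw [h1, lap_const_mul A (contDiffAt_cpow_re γ hsl),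
      lap_const_mul (1/s) (contDiffAt_cpow_re κ hsl),
      lap_cpow_re γ hsl, lap_cpow_re κ hsl]
    ring
  -- now apply the maximum principle
  intro u hc hcd hlapu hub x hx
  have hKc := isCompact_sector hδ'0 hδ'
  have hKb : ∀ z ∈ sector δ', z.re ^ 2 ≤ 1 := by
    intro z hz
    have h1 : |z.re| ≤ ‖z‖ := Complex.abs_re_le_norm z
    have h2 := hz.1
    nlinarith [abs_nonneg z.re, sq_abs z.re]
  have hfr : frontier (sector δ') ⊆ sector δ' :=
    (isClosed_sector hδ'0 hδ').frontier_subset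
  have key : ∀ y ∈ sector δ', u y - w y ≤ 0 := by
    apply max_principle hKc hKb (hc.sub hW3)
    · exact hcd.sub (fun y hy => (hW4cd y hy).contDiffWithinAt)
    · intro y hy
      show lap (fun z => u z - w z) y = 0
      rw [lap_sub (hcd.contDiffAt (isOpen_interior.mem_nhds hy)) (hW4cd y hy),
        hlapu y hy, hW4 y hy]; ring
    · intro y hy
      show u y - w y ≤ 0
      rw [hub y hy]
      have := hW1 y (hfr hy)
      linarith
  have key2 : ∀ y ∈ sector δ', -u y - w y ≤ 0 := by
    apply max_principle hKc hKb ((hc.neg).sub hW3)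
    · exact (hcd.neg).sub (fun y hy => (hW4cd y hy).contDiffWithinAt)
    · intro y hy
      have hneg : ContDiffAt ℝ 2 (fun z => -u z) y :=
        (hcd.contDiffAt (isOpen_interior.mem_nhds hy)).neg
      show lap (fun z => -u z - w z) y = 0
      rw [lap_sub hneg (hW4cd y hy)]
      have heq : (fun z => -u z) = fun z => (-1:ℝ) * u z := by funext z; ring
      rw [heq, lap_const_mul (-1) (hcd.contDiffAt (isOpen_interior.mem_nhds hy)),
        hlapu y hy, hW4 y hy]
      ring
    · intro y hy
      have h1 := hW1 y (hfr hy)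
      have h2 : 0 ≤ ‖y‖ ^ κ := Real.rpow_nonneg (norm_nonneg y) κ
      show -u y - w y ≤ 0
      rw [hub y hy]
      linarith
  have h1 := key x hx
  have h2 := key2 x hx
  have h3 := hW2 x hx
  rw [abs_le]
  have h5 : w x ≤ |w x| := le_abs_self _
  constructor
  · linarith
  · linarith

end

noncomputable section
open Real

/-- Let `δ ∈ (0, π/2)` and `p = 1 + 2δ/π`.  There is a constant `C > 0` such that:
(i) every function `Φ₁` continuous on the sector `D_δ`, harmonic in its interior and equal
to `|x|` on `∂D_δ` satisfies `|Φ₁(x)| ≤ C·|x|^{1/p}` on `D_δ`; equivalently (via the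
conformal map `z ↦ z^p` taking the half disc `D′ = sector 0` onto `D_δ`),
(ii) every function `v` continuous on the half disc `D′`, harmonic in its interior and with
boundary values `|x|^p` on `∂D′` satisfies `|v(x)| ≤ C·|x|` on `D′`. -/
theorem harmonic_sector_upper_bound (δ : ℝ) (hδ : δ ∈ Ioo (0 : ℝ) (Real.pi / 2)) :
    ∃ C > (0 : ℝ),
      (∀ Φ : ℂ → ℝ, ContinuousOn Φ (sector δ) →
        ContDiffOn ℝ 2 Φ (interior (sector δ)) →
        (∀ x ∈ interior (sector δ), lap Φ x = 0) →
        (∀ x ∈ frontier (sector δ), Φ x = ‖x‖) →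
        ∀ x ∈ sector δ,
          |Φ x| ≤ C * ‖x‖ ^ (1 / (1 + 2 * δ / Real.pi))) ∧
      (∀ v : ℂ → ℝ, ContinuousOn v (sector 0) →
        ContDiffOn ℝ 2 v (interior (sector 0)) →
        (∀ x ∈ interior (sector 0), lap v x = 0) →
        (∀ x ∈ frontier (sector 0), v x = ‖x‖ ^ (1 + 2 * δ / Real.pi)) →
        ∀ x ∈ sector 0, |v x| ≤ C * ‖x‖) := by
  obtain ⟨hδ0, hδπ⟩ := hδ
  have hpi := Real.pi_pos
  have hp1 : 1 < 1 + 2 * δ / Real.pi := by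
    have : 0 < 2 * δ / Real.pi := by positivity
    linarith
  have hγ1 : 0 < 1 / (1 + 2 * δ / Real.pi) := by positivity
  have hγle : 1 / (1 + 2 * δ / Real.pi) ≤ 1 := by
    rw [div_le_one (by linarith)]; linarith
  have hsδ : 0 < Real.sin δ := Real.sin_pos_of_pos_of_lt_pi hδ0 (by linarith)
  have hcosT : Real.cos (Real.pi / 2 + δ) = -Real.sin δ := by
    rw [Real.cos_add, Real.cos_pi_div_two, Real.sin_pi_div_two]; ring
  set γ₁ : ℝ := 1 / (1 + 2 * δ / Real.pi) with hγ₁def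
  set C₁ : ℝ := Real.pi * 1 / (2 * γ₁ * Real.sin δ) + 1 / Real.sin δ with hC₁def
  set C₂ : ℝ := Real.pi * (1 + 2 * δ / Real.pi) / (2 * 1 * Real.sin δ) + 1 / Real.sin δ
    with hC₂def
  have hC₁0 : 0 < C₁ := by
    rw [hC₁def]; positivity
  have hC₂0 : 0 < C₂ := by
    rw [hC₂def]; positivity
  refine ⟨max C₁ C₂, lt_of_lt_of_le hC₁0 (le_max_left _ _), ?_, ?_⟩
  · -- part (i)
    intro Φ hc hcd hlap hb x hx
    have hγT : γ₁ * (Real.pi / 2 + δ) = Real.pi / 2 := by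
      rw [hγ₁def]
      field_simp
    have hκT : Real.cos (1 * (Real.pi / 2 + δ)) = -Real.sin δ := by
      rw [one_mul]; exact hcosT
    have hb' : ∀ y ∈ frontier (sector δ), Φ y = ‖y‖ ^ (1:ℝ) := by
      intro y hy; rw [hb y hy, Real.rpow_one]
    have := master hδ0.le hδπ hγ1 hγle hsδ hγT hκT Φ hc hcd hlap hb' x hx
    refine this.trans ?_
    apply mul_le_mul_of_nonneg_right ?_ (Real.rpow_nonneg (norm_nonneg x) _)
    exact le_max_left _ _
  · -- part (ii)
    intro v hc hcd hlap hb x hx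
    have h0π : (0:ℝ) < Real.pi / 2 := by linarith
    have hγT : (1:ℝ) * (Real.pi / 2 + 0) = Real.pi / 2 := by ring
    have hκT : Real.cos ((1 + 2 * δ / Real.pi) * (Real.pi / 2 + 0)) = -Real.sin δ := by
      have harg : (1 + 2 * δ / Real.pi) * (Real.pi / 2 + 0) = Real.pi / 2 + δ := by
        field_simp
        ring
      rw [harg, hcosT]
    have := master (le_refl (0:ℝ)) h0π one_pos (by linarith : (1:ℝ) ≤ 1 + 2 * δ / Real.pi)
      hsδ hγT hκT v hc hcd hlap hb x hx
    rw [Real.rpow_one] at this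
    refine this.trans ?_
    apply mul_le_mul_of_nonneg_right ?_ (norm_nonneg x)
    exact le_max_right _ _

end
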